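/- arXiv:2008.12662 — 7 statements merged into one kernel-verified Lean document; each statement's English description precedes it below -/
import Mathlib

section
/- Let J be a random variable taking values in the nonnegative integers with E[J] < ∞, let ξ be a Bernoulli(1/2) random variable independent of J, and set J̃ = J − ξ. Let m̃ be the smallest integer median of J̃. Then B(J) = E|J̃ − m̃| + P(J > 0) − 1/2, where B(J) = Σ_{j≥1} min{P(J ≥ j), P(J ≤ j)}. -/
open MeasureTheory ProbabilityTheory
open scoped ENNReal

/-- Layer-cake formula for `ℕ`-valued functions. -/
lemma lintegral_nat_layercake {Ω : Type*} [MeasurableSpace Ω] (μ : Measure Ω)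
    (N : Ω → ℕ) (hN : Measurable N) :
    ∫⁻ ω, (N ω : ℝ≥0∞) ∂μ = ∑' k : ℕ, μ {ω | k < N ω} := by
  have hpt : ∀ ω, (N ω : ℝ≥0∞) = ∑' k : ℕ, Set.indicator {ω' | k < N ω'} (fun _ => (1:ℝ≥0∞)) ω := by
    intro ω
    rw [tsum_eq_sum (s := Finset.range (N ω)) (by
      intro k hk
      simp only [Finset.mem_range, not_lt] at hk
      simp [Set.indicator, Set.mem_setOf_eq, Nat.not_lt.mpr hk])]
    rw [Finset.sum_indicator_eq_sum_filter]
    simp [Finset.filter_true_of_mem, Finset.mem_range]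
  calc ∫⁻ ω, (N ω : ℝ≥0∞) ∂μ
      = ∫⁻ ω, ∑' k : ℕ, Set.indicator {ω' | k < N ω'} (fun _ => (1:ℝ≥0∞)) ω ∂μ := by
        exact lintegral_congr hpt
    _ = ∑' k : ℕ, ∫⁻ ω, Set.indicator {ω' | k < N ω'} (fun _ => (1:ℝ≥0∞)) ω ∂μ := by
        refine lintegral_tsum fun k => ?_
        exact (measurable_const.indicator (hN measurableSet_Ioi)).aemeasurable
    _ = ∑' k : ℕ, μ {ω | k < N ω} := by
        refine tsum_congr fun k => ?_
        have hms : MeasurableSet {ω | k < N ω} := hN measurableSet_Ioi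
        rw [lintegral_indicator hms]
        simp

/-- The key real-analytic identity on sums of CDF-type quantities. -/
lemma key_tsum_identity (mt : ℤ) (hmtge : -1 ≤ mt)
    (F G Fl Gl : ℤ → ℝ)
    (hFlF : ∀ n : ℤ, Fl n = (F n + F (n+1)) / 2)
    (hGlG : ∀ n : ℤ, Gl n = (G n + G (n+1)) / 2)
    (hFzero : ∀ n : ℤ, n ≤ -1 → F n = 0)
    (hGone : ∀ n : ℤ, n ≤ 0 → G n = 1)
    (hcompl : ∀ n : ℤ, G (n+1) = 1 - F n)
    (hFle1 : ∀ n : ℤ, F n ≤ 1)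
    (hFnonneg : ∀ n : ℤ, 0 ≤ F n) (hGnonneg : ∀ n : ℤ, 0 ≤ G n)
    (hmed1 : Fl mt ≥ 1/2)
    (hmin1 : ∀ n : ℤ, 1 ≤ n → n ≤ mt → min (G n) (F n) = F n)
    (hmin2 : ∀ n : ℤ, 1 ≤ n → mt + 1 ≤ n → min (G n) (F n) = G n)
    (hGsummable : ∀ c : ℤ, 0 ≤ c → Summable (fun k : ℕ => G (c + k)))
    (hFsummable : Summable (fun k : ℕ => F (mt - 1 - k))) :
    (∑' j : ℕ, min (G (j+1)) (F (j+1)))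
      = ((∑' k : ℕ, (Gl (mt + 1 + k) + Fl (mt - 1 - k))) + G 1) - 1 / 2 := by
  have hGs1 : Summable (fun k : ℕ => G (mt + 1 + k)) := hGsummable (mt+1) (by omega)
  have hGs2 : Summable (fun k : ℕ => G (mt + 1 + (k+1:ℕ))) :=
    (summable_nat_add_iff (f := fun k : ℕ => G (mt + 1 + k)) 1).2 hGs1
  have hFs2 : Summable (fun k : ℕ => F (mt - k)) := by
    refine summable_of_ne_finset_zero (s := Finset.range (mt.toNat + 1)) fun k hk => ?_
    simp only [Finset.mem_range, not_lt] at hk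
    exact hFzero _ (by omega)
  have eG : ∀ k : ℕ, mt + 1 + (k:ℤ) + 1 = mt + 1 + ((k+1:ℕ):ℤ) := by
    intro k; push_cast; ring
  have eF : ∀ k : ℕ, mt - 1 - (k:ℤ) + 1 = mt - (k:ℤ) := by
    intro k; ring
  have eF2 : ∀ k : ℕ, mt - ((k+1:ℕ):ℤ) = mt - 1 - (k:ℤ) := by
    intro k; push_cast; ring
  have hGlsummable : Summable (fun k : ℕ => Gl (mt + 1 + k)) := by
    refine ((hGs1.add hGs2).div_const 2).congr fun k => ?_
    rw [hGlG, eG k]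
  have hFlsummable : Summable (fun k : ℕ => Fl (mt - 1 - k)) := by
    refine ((hFsummable.add hFs2).div_const 2).congr fun k => ?_
    rw [hFlF, eF k]
  have hshift : ∑' k : ℕ, G (mt + 1 + (k+1:ℕ)) = (∑' k : ℕ, G (mt + 1 + k)) - G (mt + 1) := by
    have h0 := tsum_eq_zero_add' (f := fun k : ℕ => G (mt + 1 + k)) hGs2
    beta_reduce at h0
    rw [show mt + 1 + ((0:ℕ):ℤ) = mt + 1 by push_cast; ring] at h0
    linarith [h0]
  have hT1 : ∑' k : ℕ, Gl (mt + 1 + k) = (∑' k : ℕ, G (mt + 1 + k)) - G (mt + 1) / 2 := by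
    calc ∑' k : ℕ, Gl (mt + 1 + k)
        = ∑' k : ℕ, (G (mt + 1 + k) + G (mt + 1 + (k+1:ℕ))) / 2 := by
          refine tsum_congr fun k => ?_
          rw [hGlG, eG k]
      _ = ((∑' k : ℕ, G (mt + 1 + k)) + ∑' k : ℕ, G (mt + 1 + (k+1:ℕ))) / 2 := by
          rw [← Summable.tsum_add hGs1 hGs2, ← tsum_div_const]
      _ = (∑' k : ℕ, G (mt + 1 + k)) - G (mt + 1) / 2 := by
          rw [hshift]; ring
  have hFs2' : Summable (fun k : ℕ => F (mt - ((k+1:ℕ):ℤ))) :=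
    hFsummable.congr fun b => (congrArg F (eF2 b)).symm
  have hshift2 : ∑' k : ℕ, F (mt - k) = F mt + ∑' k : ℕ, F (mt - 1 - k) := by
    have h0 := tsum_eq_zero_add' (f := fun k : ℕ => F (mt - k)) hFs2'
    beta_reduce at h0
    rw [show mt - ((0:ℕ):ℤ) = mt by push_cast; ring] at h0
    rw [h0]
    congr 1
    exact tsum_congr fun k => congrArg F (eF2 k)
  have hT2 : ∑' k : ℕ, Fl (mt - 1 - k) = (∑' k : ℕ, F (mt - 1 - k)) + F mt / 2 := by
    calc ∑' k : ℕ, Fl (mt - 1 - k)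
        = ∑' k : ℕ, (F (mt - 1 - k) + F (mt - k)) / 2 := by
          refine tsum_congr fun k => ?_
          rw [hFlF, eF k]
      _ = ((∑' k : ℕ, F (mt - 1 - k)) + ∑' k : ℕ, F (mt - k)) / 2 := by
          rw [← Summable.tsum_add hFsummable hFs2, ← tsum_div_const]
      _ = (∑' k : ℕ, F (mt - 1 - k)) + F mt / 2 := by
          rw [hshift2]; ring
  set M : ℕ := mt.toNat with hM
  have hGsM : Summable (fun j : ℕ => G ((j:ℤ) + 1)) := by
    refine (hGsummable 1 (by norm_num)).congr fun k => ?_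
    rw [show (1:ℤ) + k = (k:ℤ) + 1 by ring]
  have hBsummable : Summable (fun j : ℕ => min (G (j + 1)) (F (j + 1))) :=
    Summable.of_nonneg_of_le (fun j => le_min (hGnonneg _) (hFnonneg _))
      (fun j => min_le_left _ _) hGsM
  have hBsplit : (∑' j : ℕ, min (G (j + 1)) (F (j + 1)))
      = (∑ j ∈ Finset.range M, F (j + 1)) + ∑' k : ℕ, G ((M:ℤ) + 1 + k) := by
    rw [← Summable.sum_add_tsum_nat_add M hBsummable]
    congr 1
    · refine Finset.sum_congr rfl fun j hj => ?_
      simp only [Finset.mem_range] at hj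
      exact hmin1 _ (by omega) (by omega)
    · refine tsum_congr fun k => ?_
      rw [hmin2 _ (by omega) (by omega),
        show ((k + M : ℕ):ℤ) + 1 = (M:ℤ) + 1 + k by push_cast; ring]
  have hS' : ∑' k : ℕ, F (mt - 1 - k) = ∑ j ∈ Finset.range M, F (j:ℤ) := by
    rw [tsum_eq_sum (s := Finset.range M) (fun k hk => hFzero _ (by
      simp only [Finset.mem_range, not_lt] at hk
      omega))]
    rw [← Finset.sum_range_reflect (fun j : ℕ => F (j:ℤ)) M]
    refine Finset.sum_congr rfl fun j hj => ?_
    simp only [Finset.mem_range] at hj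
    congr 1
    omega
  rw [hBsplit, Summable.tsum_add hGlsummable hFlsummable, hT1, hT2, hS']
  rcases (by omega : mt = -1 ∨ 0 ≤ mt) with hcase | hcase
  · -- mt = -1
    subst hcase
    have hM0 : M = 0 := by rw [hM]; rfl
    rw [hM0]
    simp only [Finset.range_zero, Finset.sum_empty, Nat.cast_zero]
    have hFm1 : F (-1) = 0 := hFzero _ (by norm_num)
    have hF0 : F 0 = 1 := by
      have h1 := hmed1
      rw [hFlF] at h1
      rw [show (-1:ℤ) + 1 = 0 by ring] at h1
      rw [hFm1] at h1
      have := hFle1 0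
      linarith
    have hG1 : G 1 = 0 := by
      have h := hcompl 0
      rw [show (0:ℤ) + 1 = 1 by ring] at h
      rw [hF0] at h
      linarith
    have hG0 : G (-1 + 1) = 1 := hGone _ (by norm_num)
    have hzero : ∑' k : ℕ, G (-1 + 1 + (k:ℤ)) = 1 + ∑' k : ℕ, G ((0:ℤ) + 1 + (k:ℤ)) := by
      have hs : Summable (fun k : ℕ => G (-1 + 1 + ((k+1:ℕ):ℤ))) :=
        (summable_nat_add_iff (f := fun k : ℕ => G (-1 + 1 + (k:ℤ))) 1).2
          (hGsummable 0 le_rfl |>.congr fun k => by norm_num)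
      have h0 := tsum_eq_zero_add' (f := fun k : ℕ => G (-1 + 1 + (k:ℤ))) hs
      beta_reduce at h0
      rw [show (-1:ℤ) + 1 + ((0:ℕ):ℤ) = -1 + 1 by norm_num, hG0] at h0
      rw [h0]
      congr 1
      refine tsum_congr fun k => ?_
      rw [show (-1:ℤ) + 1 + ((k+1:ℕ):ℤ) = (0:ℤ) + 1 + (k:ℤ) by push_cast; ring]
    rw [hzero, hFm1, hG1, hG0]
    ring
  · -- mt ≥ 0
    have hMZ : (M:ℤ) = mt := Int.toNat_of_nonneg hcase
    rw [hMZ]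
    have htel : ∑ j ∈ Finset.range M, (F ((j:ℤ) + 1) - F (j:ℤ))
        = F (M:ℤ) - F ((0:ℕ):ℤ) := by
      have h := Finset.sum_range_sub (f := fun j : ℕ => F (j:ℤ)) M
      rw [← h]
      refine Finset.sum_congr rfl fun j hj => ?_
      rw [show ((j+1:ℕ):ℤ) = (j:ℤ) + 1 by push_cast; ring]
    rw [Finset.sum_sub_distrib] at htel
    have hG1F : G 1 = 1 - F 0 := by
      have h := hcompl 0
      rw [show (0:ℤ) + 1 = 1 by ring] at h
      exact h
    have hGmt : G (mt + 1) = 1 - F mt := hcompl mt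
    rw [hMZ] at htel
    simp only [Nat.cast_zero] at htel
    rw [hG1F, hGmt]
    linarith

/-- Let `J` be a nonnegative-integer-valued random variable with finite
expectation, `ξ` a Bernoulli(1/2) random variable independent of `J`, and `J̃ = J − ξ`.
If `m̃` is the smallest integer median of `J̃`, then
`B(J) = Σ_{j≥1} min{P(J ≥ j), P(J ≤ j)} = E|J̃ − m̃| + P(J > 0) − 1/2`. -/
theorem stmt_0 {Ω : Type*} [MeasurableSpace Ω] (μ : Measure Ω) [IsProbabilityMeasure μ]
    (J : Ω → ℕ) (hJmeas : Measurable J)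
    (hJint : Integrable (fun ω => (J ω : ℝ)) μ)
    (ξ : Ω → ℕ) (hξmeas : Measurable ξ)
    (hξ0 : (μ {ω | ξ ω = 0}).toReal = 1 / 2) (hξ1 : (μ {ω | ξ ω = 1}).toReal = 1 / 2)
    (hindep : IndepFun J ξ μ)
    (Jt : Ω → ℤ) (hJt : ∀ ω, Jt ω = (J ω : ℤ) - (ξ ω : ℤ))
    (mt : ℤ)
    (hmt : IsLeast {m : ℤ | (μ {ω | Jt ω ≤ m}).toReal ≥ 1 / 2 ∧
            (μ {ω | m ≤ Jt ω}).toReal ≥ 1 / 2} mt) :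
    (∑' j : ℕ, min (μ {ω | j + 1 ≤ J ω}).toReal (μ {ω | J ω ≤ j + 1}).toReal)
      = (∫ ω, |(Jt ω : ℝ) - (mt : ℝ)| ∂μ) + (μ {ω | 0 < J ω}).toReal - 1 / 2 := by
  -- measurability
  have hJmeasZ : Measurable fun ω => (J ω : ℤ) := measurable_from_top.comp hJmeas
  have hJtdef : Jt = fun ω => (J ω : ℤ) - (ξ ω : ℤ) := funext hJt
  have hJtmeas : Measurable Jt := by
    rw [hJtdef]; exact hJmeasZ.sub (measurable_from_top.comp hξmeas)
  -- CDF-type functions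
  set F : ℤ → ℝ := fun n => (μ {ω | (J ω : ℤ) ≤ n}).toReal with hF
  set G : ℤ → ℝ := fun n => (μ {ω | n ≤ (J ω : ℤ)}).toReal with hG
  set Fl : ℤ → ℝ := fun n => (μ {ω | Jt ω ≤ n}).toReal with hFl
  set Gl : ℤ → ℝ := fun n => (μ {ω | n ≤ Jt ω}).toReal with hGl
  -- ξ is a.e. in {0,1}, splitting lemma
  have hxim : ∀ i : ℕ, MeasurableSet {ω | ξ ω = i} := fun i => hξmeas (measurableSet_singleton i)
  have hxi0 : μ {ω | ξ ω = 0} = ENNReal.ofReal (1/2) := by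
    rw [← hξ0, ENNReal.ofReal_toReal (measure_ne_top μ _)]
  have hxi1 : μ {ω | ξ ω = 1} = ENNReal.ofReal (1/2) := by
    rw [← hξ1, ENNReal.ofReal_toReal (measure_ne_top μ _)]
  have hdisj : Disjoint {ω | ξ ω = 0} {ω | ξ ω = 1} := by
    rw [Set.disjoint_left]; intro ω h0 h1; simp only [Set.mem_setOf_eq] at h0 h1; omega
  have hunion : μ ({ω | ξ ω = 0} ∪ {ω | ξ ω = 1}) = 1 := by
    rw [measure_union hdisj (hxim 1), hxi0, hxi1, ← ENNReal.ofReal_add (by norm_num) (by norm_num)]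
    norm_num
  have hxinull : μ ({ω | ξ ω = 0} ∪ {ω | ξ ω = 1})ᶜ = 0 := by
    rw [measure_compl ((hxim 0).union (hxim 1)) (measure_ne_top μ _), hunion, measure_univ,
      tsub_self]
  have hae01 : ∀ᵐ ω ∂μ, ξ ω = 0 ∨ ξ ω = 1 := by
    rw [ae_iff]
    have hset : {ω | ¬(ξ ω = 0 ∨ ξ ω = 1)} = ({ω | ξ ω = 0} ∪ {ω | ξ ω = 1})ᶜ := by
      ext ω; simp [not_or]
    rw [hset]
    exact hxinull
  have hsplit : ∀ (B : Set Ω) (S0 S1 : Set ℕ),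
      (B ∩ {ω | ξ ω = 0} = J ⁻¹' S0 ∩ ξ ⁻¹' {0}) →
      (B ∩ {ω | ξ ω = 1} = J ⁻¹' S1 ∩ ξ ⁻¹' {1}) →
      (μ B).toReal = ((μ (J ⁻¹' S0)).toReal + (μ (J ⁻¹' S1)).toReal) / 2 := by
    intro B S0 S1 h0 h1
    have hd : μ B = μ (B ∩ {ω | ξ ω = 0}) + μ (B ∩ {ω | ξ ω = 1}) := by
      have h01 : μ (B ∩ ({ω | ξ ω = 0} ∪ {ω | ξ ω = 1})) = μ B :=
        measure_inter_conull hxinull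
      rw [← h01, Set.inter_union_distrib_left,
        measure_union (hdisj.mono Set.inter_subset_right Set.inter_subset_right)
          (by rw [h1]; exact (hJmeas trivial).inter (hxim 1))]
    have e0 : μ (B ∩ {ω | ξ ω = 0}) = μ (J ⁻¹' S0) * ENNReal.ofReal (1/2) := by
      rw [h0, hindep.measure_inter_preimage_eq_mul _ _ trivial (measurableSet_singleton 0)]
      congr 1
    have e1 : μ (B ∩ {ω | ξ ω = 1}) = μ (J ⁻¹' S1) * ENNReal.ofReal (1/2) := by
      rw [h1, hindep.measure_inter_preimage_eq_mul _ _ trivial (measurableSet_singleton 1)]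
      congr 1
    rw [hd, e0, e1, ENNReal.toReal_add (by finiteness) (by finiteness), ENNReal.toReal_mul,
      ENNReal.toReal_mul, ENNReal.toReal_ofReal (by norm_num)]
    ring
  -- distribution of Jt in terms of that of J
  have hFlF : ∀ n : ℤ, Fl n = (F n + F (n+1)) / 2 := by
    intro n
    refine hsplit {ω | Jt ω ≤ n} {m | (m:ℤ) ≤ n} {m | (m:ℤ) ≤ n + 1} ?_ ?_
    · ext ω
      simp only [Set.mem_inter_iff, Set.mem_setOf_eq, Set.mem_preimage, Set.mem_singleton_iff,
        hJt ω]
      omega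
    · ext ω
      simp only [Set.mem_inter_iff, Set.mem_setOf_eq, Set.mem_preimage, Set.mem_singleton_iff,
        hJt ω]
      omega
  have hGlG : ∀ n : ℤ, Gl n = (G n + G (n+1)) / 2 := by
    intro n
    refine hsplit {ω | n ≤ Jt ω} {m | n ≤ (m:ℤ)} {m | n + 1 ≤ (m:ℤ)} ?_ ?_
    · ext ω
      simp only [Set.mem_inter_iff, Set.mem_setOf_eq, Set.mem_preimage, Set.mem_singleton_iff,
        hJt ω]
      omega
    · ext ω
      simp only [Set.mem_inter_iff, Set.mem_setOf_eq, Set.mem_preimage, Set.mem_singleton_iff,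
        hJt ω]
      omega
  -- simple facts about F and G
  have hFzero : ∀ n : ℤ, n ≤ -1 → F n = 0 := by
    intro n hn
    have : {ω | (J ω : ℤ) ≤ n} = ∅ := by
      ext ω; simp only [Set.mem_setOf_eq, Set.mem_empty_iff_false, iff_false]; omega
    rw [hF]; simp only [this, measure_empty, ENNReal.toReal_zero]
  have hGone : ∀ n : ℤ, n ≤ 0 → G n = 1 := by
    intro n hn
    have : {ω | n ≤ (J ω : ℤ)} = Set.univ := by
      ext ω; simp only [Set.mem_setOf_eq, Set.mem_univ, iff_true]; omega
    rw [hG]; simp only [this, measure_univ, ENNReal.toReal_one]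
  have hcompl : ∀ n : ℤ, G (n+1) = 1 - F n := by
    intro n
    have hc : {ω | n + 1 ≤ (J ω : ℤ)} = {ω | (J ω : ℤ) ≤ n}ᶜ := by
      ext ω; simp only [Set.mem_setOf_eq, Set.mem_compl_iff]; omega
    show (μ {ω | n + 1 ≤ (J ω : ℤ)}).toReal = 1 - (μ {ω | (J ω : ℤ) ≤ n}).toReal
    have hms : MeasurableSet {ω | (J ω : ℤ) ≤ n} := hJmeasZ measurableSet_Iic
    rw [hc, measure_compl hms (measure_ne_top μ _), measure_univ,
      ENNReal.toReal_sub_of_le prob_le_one ENNReal.one_ne_top, ENNReal.toReal_one]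
  have hFle1 : ∀ n : ℤ, F n ≤ 1 := by
    intro n
    have := ENNReal.toReal_mono ENNReal.one_ne_top
      (prob_le_one (μ := μ) (s := {ω | (J ω : ℤ) ≤ n}))
    simpa using this
  have hFnonneg : ∀ n : ℤ, 0 ≤ F n := fun n => ENNReal.toReal_nonneg
  have hGnonneg : ∀ n : ℤ, 0 ≤ G n := fun n => ENNReal.toReal_nonneg
  have hPgt : (μ {ω | 0 < J ω}).toReal = G 1 := by
    have hs : {ω | 0 < J ω} = {ω | (1:ℤ) ≤ (J ω : ℤ)} := by
      ext ω; simp only [Set.mem_setOf_eq]; omega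
    rw [hG, hs]
  -- monotonicity and median facts
  have hFlmono : Monotone Fl := by
    intro a b hab
    exact ENNReal.toReal_mono (measure_ne_top μ _)
      (measure_mono fun ω (h : Jt ω ≤ a) => le_trans h hab)
  have hGlanti : Antitone Gl := by
    intro a b hab
    exact ENNReal.toReal_mono (measure_ne_top μ _)
      (measure_mono fun ω (h : b ≤ Jt ω) => le_trans hab h)
  have hmed1 : Fl mt ≥ 1/2 := hmt.1.1
  have hmed2 : Gl mt ≥ 1/2 := hmt.1.2
  have hlow : ∀ m : ℤ, m < mt → Fl m < 1/2 := by
    intro m hm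
    by_contra h
    push_neg at h
    have hGm : Gl m ≥ 1/2 := le_trans hmed2 (hGlanti hm.le)
    have := hmt.2 ⟨h, hGm⟩
    omega
  have hmtge : -1 ≤ mt := by
    by_contra h
    push_neg at h
    have h2 : Fl mt ≤ Fl (-2) := hFlmono (by omega)
    have h3 : Fl (-2) = 0 := by
      rw [hFlF, hFzero _ (by norm_num), hFzero _ (by norm_num)]
      norm_num
    linarith
  -- min identities
  have hmin1 : ∀ n : ℤ, 1 ≤ n → n ≤ mt → min (G n) (F n) = F n := by
    intro n h1 h2
    have hl := hlow (n-1) (by omega)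
    simp only [hFlF] at hl
    have he : n - 1 + 1 = n := by ring
    rw [he] at hl
    have hGn : G n = 1 - F (n-1) := by
      have := hcompl (n-1); rwa [he] at this
    exact min_eq_right (by linarith)
  have hmin2 : ∀ n : ℤ, 1 ≤ n → mt + 1 ≤ n → min (G n) (F n) = G n := by
    intro n h1 h2
    have hl : (1:ℝ)/2 ≤ Fl (n-1) := le_trans hmed1 (hFlmono (by omega))
    simp only [hFlF] at hl
    have he : n - 1 + 1 = n := by ring
    rw [he] at hl
    have hGn : G n = 1 - F (n-1) := by
      have := hcompl (n-1); rwa [he] at this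
    exact min_eq_left (by linarith)
  -- summability
  have hJfin : ∫⁻ ω, (J ω : ℝ≥0∞) ∂μ ≠ ⊤ := by
    have h2 : ∫⁻ ω, (‖(J ω : ℝ)‖₊ : ℝ≥0∞) ∂μ < ⊤ := hJint.2
    have heq : ∀ ω, (‖(J ω : ℝ)‖₊ : ℝ≥0∞) = (J ω : ℝ≥0∞) := by
      intro ω
      simp [Real.nnnorm_natCast]
    rw [lintegral_congr heq] at h2
    exact h2.ne
  have hJlint : ∑' k : ℕ, μ {ω | (k:ℤ) ≤ (J ω : ℤ)} ≠ ⊤ := by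
    have hsets : ∀ k : ℕ, {ω | (k:ℤ) ≤ (J ω : ℤ)} = {ω | k ≤ J ω} := by
      intro k; ext ω; simp only [Set.mem_setOf_eq]; omega
    have h0 : ∑' k : ℕ, μ {ω | (k:ℤ) ≤ (J ω : ℤ)}
        = μ {ω | 0 ≤ J ω} + ∑' k : ℕ, μ {ω | k + 1 ≤ J ω} := by
      simp only [hsets]
      exact tsum_eq_zero_add' ENNReal.summable
    rw [h0]
    refine ENNReal.add_ne_top.2 ⟨measure_ne_top μ _, ?_⟩
    have : ∀ k : ℕ, {ω | k + 1 ≤ J ω} = {ω | k < J ω} := by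
      intro k; ext ω; simp only [Set.mem_setOf_eq]; omega
    simp only [this]
    rw [← lintegral_nat_layercake μ J hJmeas]
    exact hJfin
  have hgsummable : Summable (fun k : ℕ => (μ {ω | (k:ℤ) ≤ (J ω : ℤ)}).toReal) :=
    ENNReal.summable_toReal hJlint
  have hGsummable : ∀ c : ℤ, 0 ≤ c → Summable (fun k : ℕ => G (c + k)) := by
    intro c hc
    have h1 : Summable (fun k : ℕ => (μ {ω | ((k + c.toNat : ℕ):ℤ) ≤ (J ω : ℤ)}).toReal) :=
      (summable_nat_add_iff (f := fun k : ℕ => (μ {ω | (k:ℤ) ≤ (J ω : ℤ)}).toReal) c.toNat).2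
        hgsummable
    refine h1.congr fun k => ?_
    have hck : ((k + c.toNat : ℕ) : ℤ) = c + k := by push_cast; omega
    rw [hG]
    simp only [hck]
  have hFsummable : Summable (fun k : ℕ => F (mt - 1 - k)) := by
    refine summable_of_ne_finset_zero (s := Finset.range (mt.toNat + 1)) fun k hk => ?_
    simp only [Finset.mem_range, not_lt] at hk
    exact hFzero _ (by omega)
  -- layer cake for the expectation
  set N : Ω → ℕ := fun ω => (Jt ω - mt).natAbs with hN
  have hNmeas : Measurable N :=
    (measurable_from_top (f := Int.natAbs)).comp (hJtmeas.sub (measurable_const (a := mt)))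
  have habs : ∀ ω, |(Jt ω : ℝ) - (mt : ℝ)| = (N ω : ℝ) := by
    intro ω
    rw [hN]
    simp only [Nat.cast_natAbs]
    push_cast
    ring_nf
  have hNint : Integrable (fun ω => (N ω : ℝ)) μ := by
    refine Integrable.mono' (g := fun ω => (J ω : ℝ) + (1 + |(mt : ℝ)|))
      (hJint.add (integrable_const _))
      ((measurable_from_top.comp hNmeas).aestronglyMeasurable) ?_
    filter_upwards [hae01] with ω hω
    rw [Real.norm_eq_abs, abs_of_nonneg (Nat.cast_nonneg _)]
    have h1 : |(mt:ℝ)| = ((mt.natAbs : ℕ) : ℝ) := by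
      rw [Nat.cast_natAbs, Int.cast_abs]
    rw [h1]
    have h2 : (N ω : ℤ) ≤ (J ω : ℤ) + (1 + (mt.natAbs : ℤ)) := by
      rw [hN]
      simp only [hJt ω]
      omega
    exact_mod_cast h2
  have hE : (∫ ω, |(Jt ω : ℝ) - (mt : ℝ)| ∂μ)
      = ∑' k : ℕ, (Gl (mt + 1 + k) + Fl (mt - 1 - k)) := by
    have hIeq : ∫ ω, |(Jt ω : ℝ) - (mt : ℝ)| ∂μ = ∫ ω, (N ω : ℝ) ∂μ :=
      integral_congr_ae (Filter.Eventually.of_forall habs)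
    have hlint : ∫ ω, (N ω : ℝ) ∂μ = (∫⁻ ω, (N ω : ℝ≥0∞) ∂μ).toReal := by
      rw [integral_eq_lintegral_of_nonneg_ae
        (Filter.Eventually.of_forall fun ω => Nat.cast_nonneg _)
        ((measurable_from_top.comp hNmeas).aestronglyMeasurable)]
      congr 1
      exact lintegral_congr fun ω => ENNReal.ofReal_natCast _
    have hsetsplit : ∀ k : ℕ, μ {ω | k < N ω}
        = μ {ω | mt + 1 + k ≤ Jt ω} + μ {ω | Jt ω ≤ mt - 1 - k} := by
      intro k
      have hset : {ω | k < N ω} = {ω | mt + 1 + k ≤ Jt ω} ∪ {ω | Jt ω ≤ mt - 1 - k} := by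
        ext ω
        simp only [Set.mem_setOf_eq, Set.mem_union, hN]
        omega
      have hms2 : MeasurableSet {ω | Jt ω ≤ mt - 1 - (k:ℤ)} := hJtmeas measurableSet_Iic
      have hdis : Disjoint {ω | mt + 1 + (k:ℤ) ≤ Jt ω} {ω | Jt ω ≤ mt - 1 - (k:ℤ)} := by
        rw [Set.disjoint_left]
        intro ω ha hb
        simp only [Set.mem_setOf_eq] at ha hb
        omega
      rw [hset, measure_union hdis hms2]
    rw [hIeq, hlint, lintegral_nat_layercake μ N hNmeas]
    rw [ENNReal.tsum_toReal_eq (fun k => measure_ne_top μ _)]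
    refine tsum_congr fun k => ?_
    rw [hsetsplit k, ENNReal.toReal_add (measure_ne_top μ _) (measure_ne_top μ _)]
  -- translate the B side
  have hBeq : (∑' j : ℕ, min (μ {ω | j + 1 ≤ J ω}).toReal (μ {ω | J ω ≤ j + 1}).toReal)
      = ∑' j : ℕ, min (G (j + 1)) (F (j + 1)) := by
    refine tsum_congr fun j => ?_
    have h1 : {ω | j + 1 ≤ J ω} = {ω | ((j:ℤ) + 1) ≤ (J ω : ℤ)} := by
      ext ω; simp only [Set.mem_setOf_eq]; omega
    have h2 : {ω | J ω ≤ j + 1} = {ω | (J ω : ℤ) ≤ ((j:ℤ) + 1)} := by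
      ext ω; simp only [Set.mem_setOf_eq]; omega
    rw [h1, h2, hG, hF]
  -- conclude
  rw [hBeq, hE, hPgt]
  exact key_tsum_identity mt hmtge F G Fl Gl hFlF hGlG hFzero hGone hcompl hFle1 hFnonneg
    hGnonneg hmed1 hmin1 hmin2 hGsummable hFsummable
end

section
/- Let J be a random variable taking values in the nonnegative integers with E[J] < ∞, and let m be the smallest integer median of J. Then B(J) = E|J − m| + P(J > 0) − max{P(J > m), P(J < m)}, where B(J) = Σ_{j≥1} min{P(J ≥ j), P(J ≤ j)}. -/
open MeasureTheory ProbabilityTheory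

private lemma tsum_ite_nat (n : ℕ) :
    (∑' k : ℕ, (if k + 1 ≤ n then (1 : ENNReal) else 0)) = n := by
  rw [tsum_eq_sum (s := Finset.range n)
    (fun k hk => by rw [if_neg]; simp at hk; omega)]
  rw [Finset.sum_congr rfl (fun k hk => by rw [if_pos]; simp at hk; omega)]
  simp

private lemma lint_nat {Ω : Type*} [MeasurableSpace Ω] (μ : Measure Ω)
    (X : Ω → ℕ) (hX : Measurable X) :
    ∫⁻ ω, (X ω : ENNReal) ∂μ = ∑' k : ℕ, μ {ω | k + 1 ≤ X ω} := by
  have hset : ∀ k : ℕ, MeasurableSet {ω | k + 1 ≤ X ω} :=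
    fun k => hX (measurableSet_Ici (a := k + 1))
  calc ∫⁻ ω, (X ω : ENNReal) ∂μ
      = ∫⁻ ω, ∑' k : ℕ, Set.indicator {ω' | k + 1 ≤ X ω'} (fun _ => (1 : ENNReal)) ω ∂μ := by
        refine lintegral_congr fun ω => ?_
        simp only [Set.indicator_apply, Set.mem_setOf_eq]
        exact (tsum_ite_nat (X ω)).symm
    _ = ∑' k : ℕ, ∫⁻ ω, Set.indicator {ω' | k + 1 ≤ X ω'} (fun _ => (1 : ENNReal)) ω ∂μ :=
        lintegral_tsum (fun k => (measurable_const.indicator (hset k)).aemeasurable)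
    _ = ∑' k : ℕ, μ {ω | k + 1 ≤ X ω} := by
        refine tsum_congr fun k => ?_
        rw [lintegral_indicator_const (hset k), one_mul]

private lemma exp_nat {Ω : Type*} [MeasurableSpace Ω] (μ : Measure Ω) [IsFiniteMeasure μ]
    (X : Ω → ℕ) (hX : Measurable X) (hint : Integrable (fun ω => (X ω : ℝ)) μ) :
    ∫ ω, (X ω : ℝ) ∂μ = ∑' k : ℕ, (μ {ω | k + 1 ≤ X ω}).toReal := by
  rw [integral_eq_lintegral_of_nonneg_ae (ae_of_all _ fun ω => Nat.cast_nonneg _)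
    hint.aestronglyMeasurable]
  simp_rw [ENNReal.ofReal_natCast]
  rw [lint_nat μ X hX, ENNReal.tsum_toReal_eq (fun k => measure_ne_top μ _)]

private lemma tail_ne_top {Ω : Type*} [MeasurableSpace Ω] (μ : Measure Ω)
    (X : Ω → ℕ) (hX : Measurable X) (hint : Integrable (fun ω => (X ω : ℝ)) μ) :
    (∑' k : ℕ, μ {ω | k + 1 ≤ X ω}) ≠ ⊤ := by
  rw [← lint_nat μ X hX]
  have := hint.lintegral_lt_top
  simp_rw [ENNReal.ofReal_natCast] at this
  exact this.ne

/-- Let `J` be a nonnegative-integer-valued random variable with finite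
expectation and let `m` be the smallest integer median of `J`.  Then
`B(J) = Σ_{j≥1} min{P(J ≥ j), P(J ≤ j)}
      = E|J − m| + P(J > 0) − max{P(J > m), P(J < m)}`. -/
theorem stmt_1 {Ω : Type*} [MeasurableSpace Ω] (μ : Measure Ω) [IsProbabilityMeasure μ]
    (J : Ω → ℕ) (hJmeas : Measurable J)
    (hJint : Integrable (fun ω => (J ω : ℝ)) μ)
    (m : ℕ)
    (hm : IsLeast {n : ℕ | (μ {ω | J ω ≤ n}).toReal ≥ 1 / 2 ∧
            (μ {ω | n ≤ J ω}).toReal ≥ 1 / 2} m) :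
    (∑' j : ℕ, min (μ {ω | j + 1 ≤ J ω}).toReal (μ {ω | J ω ≤ j + 1}).toReal)
      = (∫ ω, |(J ω : ℝ) - (m : ℝ)| ∂μ) + (μ {ω | 0 < J ω}).toReal
        - max (μ {ω | m < J ω}).toReal (μ {ω | J ω < m}).toReal := by
  -- measurability of level sets
  have hle : ∀ n : ℕ, MeasurableSet {ω | J ω ≤ n} := fun n => hJmeas (measurableSet_Iic (a := n))
  have hge : ∀ n : ℕ, MeasurableSet {ω | n ≤ J ω} := fun n => hJmeas (measurableSet_Ici (a := n))
  -- complement facts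
  have hcompl : ∀ (A : Set Ω), MeasurableSet A → (μ Aᶜ).toReal = 1 - (μ A).toReal := by
    intro A hA
    have h1 : μ A + μ Aᶜ = 1 := by rw [measure_add_measure_compl hA, measure_univ]
    have h2 : (μ A).toReal + (μ Aᶜ).toReal = 1 := by
      rw [← ENNReal.toReal_add (measure_ne_top μ _) (measure_ne_top μ _), h1]; simp
    linarith
  -- monotonicity
  have hfmono : ∀ a b : ℕ, a ≤ b → (μ {ω | J ω ≤ a}).toReal ≤ (μ {ω | J ω ≤ b}).toReal :=
    fun a b hab => ENNReal.toReal_mono (measure_ne_top μ _)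
      (measure_mono fun ω h => le_trans h hab)
  have hgmono : ∀ a b : ℕ, a ≤ b → (μ {ω | b ≤ J ω}).toReal ≤ (μ {ω | a ≤ J ω}).toReal :=
    fun a b hab => ENNReal.toReal_mono (measure_ne_top μ _)
      (measure_mono fun ω h => le_trans hab h)
  -- median facts
  have hfm : (μ {ω | J ω ≤ m}).toReal ≥ 1 / 2 := hm.1.1
  have hgm : (μ {ω | m ≤ J ω}).toReal ≥ 1 / 2 := hm.1.2
  have hflt : ∀ n : ℕ, n < m → (μ {ω | J ω ≤ n}).toReal < 1 / 2 := by
    intro n hn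
    by_contra h
    push_neg at h
    have : m ≤ n := hm.2 ⟨h, le_trans hgm (hgmono n m (le_of_lt hn))⟩
    omega
  -- g(m+1) ≤ 1/2
  have hgm1 : (μ {ω | m + 1 ≤ J ω}).toReal ≤ 1 / 2 := by
    have h : {ω | m + 1 ≤ J ω} = {ω | J ω ≤ m}ᶜ := by ext ω; simp only [Set.mem_setOf_eq, Set.mem_compl_iff, not_le]; omega
    rw [h, hcompl _ (hle m)]; linarith
  -- measurability / integrability of the two truncated parts
  have hmeas1 : Measurable (fun ω => J ω - m) :=
    show Measurable ((fun n : ℕ => n - m) ∘ J) from measurable_from_top.comp hJmeas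
  have hmeas2 : Measurable (fun ω => m - J ω) :=
    show Measurable ((fun n : ℕ => m - n) ∘ J) from measurable_from_top.comp hJmeas
  have hcastm : ∀ (X : Ω → ℕ), Measurable X → Measurable (fun ω => (X ω : ℝ)) :=
    fun X hX => show Measurable ((fun n : ℕ => (n : ℝ)) ∘ X) from measurable_from_top.comp hX
  have hint1 : Integrable (fun ω => ((J ω - m : ℕ) : ℝ)) μ := by
    refine hJint.mono (hcastm _ hmeas1).aestronglyMeasurable (ae_of_all _ fun ω => ?_)
    simp only [Real.norm_eq_abs]
    rw [abs_of_nonneg (by positivity), abs_of_nonneg (by positivity)]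
    exact_mod_cast Nat.sub_le (J ω) m
  have hint2 : Integrable (fun ω => ((m - J ω : ℕ) : ℝ)) μ := by
    refine (integrable_const (m : ℝ)).mono (hcastm _ hmeas2).aestronglyMeasurable (ae_of_all _ fun ω => ?_)
    simp only [Real.norm_eq_abs]
    rw [abs_of_nonneg (by positivity), abs_of_nonneg (by positivity)]
    exact_mod_cast Nat.sub_le m (J ω)
  -- decomposition of |J - m|
  have habs : ∀ ω, |(J ω : ℝ) - (m : ℝ)| = ((J ω - m : ℕ) : ℝ) + ((m - J ω : ℕ) : ℝ) := by
    intro ω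
    rcases le_total m (J ω) with h | h
    · rw [abs_of_nonneg (sub_nonneg.mpr (by exact_mod_cast h)),
        Nat.sub_eq_zero_of_le h]
      push_cast [h]
      ring
    · rw [abs_of_nonpos (sub_nonpos.mpr (by exact_mod_cast h)),
        Nat.sub_eq_zero_of_le h]
      push_cast [h]
      ring
  have hEabs : (∫ ω, |(J ω : ℝ) - (m : ℝ)| ∂μ)
      = (∑' k : ℕ, (μ {ω | m + k + 1 ≤ J ω}).toReal)
        + ∑ i ∈ Finset.range m, (μ {ω | J ω ≤ i}).toReal := by
    rw [integral_congr_ae (ae_of_all _ habs), integral_add hint1 hint2,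
      exp_nat μ _ hmeas1 hint1, exp_nat μ _ hmeas2 hint2]
    congr 1
    · refine tsum_congr fun k => ?_
      have hS : {ω | k + 1 ≤ J ω - m} = {ω | m + k + 1 ≤ J ω} := by
        ext ω; simp only [Set.mem_setOf_eq]; omega
      rw [hS]
    · -- second sum: only k < m contribute
      rw [tsum_eq_sum (s := Finset.range m) (fun k hk => by
        have : {ω | k + 1 ≤ m - J ω} = (∅ : Set Ω) := by
          ext ω; simp only [Set.mem_setOf_eq, Set.mem_empty_iff_false, iff_false]
          simp at hk; omega
        rw [this]; simp)]
      rw [Finset.sum_congr rfl (fun k hk => by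
        have : {ω | k + 1 ≤ m - J ω} = {ω | J ω ≤ m - 1 - k} := by
          ext ω; simp only [Set.mem_setOf_eq]
          simp at hk; omega
        rw [this])]
      exact Finset.sum_range_reflect (fun i => (μ {ω | J ω ≤ i}).toReal) m
  -- summability of the min sequence
  have hsumg : Summable (fun j : ℕ => (μ {ω | j + 1 ≤ J ω}).toReal) :=
    ENNReal.summable_toReal (tail_ne_top μ J hJmeas hJint)
  have hsummin : Summable (fun j : ℕ =>
      min (μ {ω | j + 1 ≤ J ω}).toReal (μ {ω | J ω ≤ j + 1}).toReal) := by
    refine Summable.of_nonneg_of_le (fun j => le_min ENNReal.toReal_nonneg ENNReal.toReal_nonneg)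
      (fun j => min_le_left _ _) hsumg
  -- split the tsum at m
  have hsplit := Summable.sum_add_tsum_nat_add m hsummin
  -- the tail: min = g
  have htail : (∑' k : ℕ, min (μ {ω | (k + m) + 1 ≤ J ω}).toReal
      (μ {ω | J ω ≤ (k + m) + 1}).toReal) = ∑' k : ℕ, (μ {ω | m + k + 1 ≤ J ω}).toReal := by
    refine tsum_congr fun k => ?_
    have hidx : {ω | (k + m) + 1 ≤ J ω} = {ω | m + k + 1 ≤ J ω} := by
      ext ω; simp only [Set.mem_setOf_eq]; omega
    rw [hidx]
    refine min_eq_left ?_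
    calc (μ {ω | m + k + 1 ≤ J ω}).toReal
        ≤ (μ {ω | m + 1 ≤ J ω}).toReal := hgmono _ _ (by omega)
      _ ≤ 1 / 2 := hgm1
      _ ≤ (μ {ω | J ω ≤ m}).toReal := hfm
      _ ≤ (μ {ω | J ω ≤ (k + m) + 1}).toReal := hfmono _ _ (by omega)
  -- compute quantities via complements
  have hP0 : (μ {ω | 0 < J ω}).toReal = 1 - (μ {ω | J ω ≤ 0}).toReal := by
    have h : {ω | 0 < J ω} = {ω | J ω ≤ 0}ᶜ := by ext ω; simp [Nat.pos_iff_ne_zero]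
    rw [h, hcompl _ (hle 0)]
  have hPgt : (μ {ω | m < J ω}).toReal = 1 - (μ {ω | J ω ≤ m}).toReal := by
    have h : {ω | m < J ω} = {ω | J ω ≤ m}ᶜ := by ext ω; simp
    rw [h, hcompl _ (hle m)]
  have hPlt : (μ {ω | J ω < m}).toReal = 1 - (μ {ω | m ≤ J ω}).toReal := by
    have h : {ω | J ω < m} = {ω | m ≤ J ω}ᶜ := by ext ω; simp
    rw [h, hcompl _ (hge m)]
  have hmax : ∀ a b : ℝ, max (1 - a) (1 - b) = 1 - min a b := by
    intro a b
    rcases le_total a b with h | h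
    · rw [min_eq_left h, max_eq_left (by linarith)]
    · rw [min_eq_right h, max_eq_right (by linarith)]
  -- head sum
  have hhead : (∑ j ∈ Finset.range m, min (μ {ω | j + 1 ≤ J ω}).toReal
        (μ {ω | J ω ≤ j + 1}).toReal)
      = (∑ i ∈ Finset.range m, (μ {ω | J ω ≤ i}).toReal)
        - (μ {ω | J ω ≤ 0}).toReal
        + min (μ {ω | J ω ≤ m}).toReal (μ {ω | m ≤ J ω}).toReal := by
    rcases Nat.eq_zero_or_pos m with hm0 | hmpos
    · subst hm0
      simp only [Finset.range_zero, Finset.sum_empty]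
      have hg0 : (μ {ω | 0 ≤ J ω}).toReal = 1 := by
        have : {ω | 0 ≤ J ω} = Set.univ := by ext ω; simp
        rw [this]; simp
      rw [hg0, min_eq_left (by
        have := prob_le_one (μ := μ) (s := {ω | J ω ≤ 0})
        exact_mod_cast ENNReal.toReal_mono ENNReal.one_ne_top this)]
      ring
    · obtain ⟨m', rfl⟩ : ∃ m', m = m' + 1 := ⟨m - 1, by omega⟩
      rw [Finset.sum_range_succ, Finset.sum_range_succ']
      have hmin : ∀ j ∈ Finset.range m', min (μ {ω | j + 1 ≤ J ω}).toReal
          (μ {ω | J ω ≤ j + 1}).toReal = (μ {ω | J ω ≤ j + 1}).toReal := by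
        intro j hj
        simp only [Finset.mem_range] at hj
        refine min_eq_right (le_trans (le_of_lt (hflt (j + 1) (by omega)))
          (le_trans hgm (hgmono _ _ (by omega))))
      rw [Finset.sum_congr rfl hmin]
      rw [min_comm]
      ring
  -- assemble
  rw [← hsplit, htail, hEabs, hhead, hP0, hPgt, hPlt, hmax]
  ring
end

section
/- Let τ be a random variable taking integer values with τ ≥ L almost surely, where L ≥ 1 and k ≥ 0 are integers, and define J = max{0, ⌈(τ − L − k)/L⌉}. If E[J] < ∞, then B(J) = 0.5·Σ_{j≥1} [1 − |P(τ > k + (j+1)L) + P(τ > k + jL) − 1|] + 0.5·P(τ > k + L), where B(J) = Σ_{j≥1} min{P(J ≥ j), P(J ≤ j)}. -/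
open MeasureTheory ProbabilityTheory

/-- Let `τ` be an integer-valued random variable with `τ ≥ L` almost surely,
where `L ≥ 1` and `k ≥ 0` are integers, and let `J = max{0, ⌈(τ − L − k)/L⌉}`.
If `E[J] < ∞` then
`B(J) = Σ_{j≥1} min{P(J ≥ j), P(J ≤ j)}
      = 0.5·Σ_{j≥1} [1 − |P(τ > k+(j+1)L) + P(τ > k+jL) − 1|] + 0.5·P(τ > k+L)`. -/
theorem stmt_2 {Ω : Type*} [MeasurableSpace Ω] (μ : Measure Ω) [IsProbabilityMeasure μ]
    (τ : Ω → ℤ) (hτmeas : Measurable τ)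
    (L k : ℤ) (hL : 1 ≤ L) (hk : 0 ≤ k)
    (hτL : ∀ᵐ ω ∂μ, L ≤ τ ω)
    (J : Ω → ℤ)
    (hJ : ∀ ω, J ω = max 0 ⌈((τ ω : ℝ) - (L : ℝ) - (k : ℝ)) / (L : ℝ)⌉)
    (hJint : Integrable (fun ω => (J ω : ℝ)) μ) :
    (∑' j : ℕ, min (μ {ω | (j : ℤ) + 1 ≤ J ω}).toReal (μ {ω | J ω ≤ (j : ℤ) + 1}).toReal)
      = 0.5 * (∑' j : ℕ,
          (1 - |(μ {ω | k + ((j : ℤ) + 2) * L < τ ω}).toReal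
                + (μ {ω | k + ((j : ℤ) + 1) * L < τ ω}).toReal - 1|))
        + 0.5 * (μ {ω | k + L < τ ω}).toReal := by
  have hLZ : (0 : ℤ) < L := by omega
  have hLR : (0 : ℝ) < (L : ℝ) := by exact_mod_cast hLZ
  set a : ℕ → ℝ := fun j => (μ {ω | k + ((j : ℤ) + 1) * L < τ ω}).toReal with ha_def
  have hmeas : ∀ c : ℤ, MeasurableSet {ω | c < τ ω} := fun c =>
    hτmeas measurableSet_Ioi
  -- set identities
  have hset1 : ∀ j : ℕ, {ω | (j : ℤ) + 1 ≤ J ω} = {ω | k + ((j : ℤ) + 1) * L < τ ω} := by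
    intro j; ext ω
    simp only [Set.mem_setOf_eq, hJ ω, le_max_iff]
    constructor
    · rintro (h | h)
      · omega
      · rw [Int.add_one_le_iff, Int.lt_ceil, lt_div_iff₀ hLR] at h
        have h2 : (k : ℝ) + ((j : ℤ) + 1) * (L : ℝ) < (τ ω : ℝ) := by
          push_cast at h ⊢; linarith
        exact_mod_cast h2
    · intro h
      right
      rw [Int.add_one_le_iff, Int.lt_ceil, lt_div_iff₀ hLR]
      have h2 : (k : ℝ) + ((j : ℤ) + 1) * (L : ℝ) < (τ ω : ℝ) := by exact_mod_cast h
      push_cast at h2 ⊢; linarith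
  have hset2 : ∀ j : ℕ, {ω | J ω ≤ (j : ℤ) + 1} = {ω | k + ((j : ℤ) + 2) * L < τ ω}ᶜ := by
    intro j; ext ω
    simp only [Set.mem_setOf_eq, Set.mem_compl_iff, hJ ω, max_le_iff, not_lt]
    constructor
    · rintro ⟨-, h⟩
      rw [Int.ceil_le, div_le_iff₀ hLR] at h
      have h2 : (τ ω : ℝ) ≤ (k : ℝ) + ((j : ℤ) + 2) * (L : ℝ) := by
        push_cast at h ⊢; linarith
      exact_mod_cast h2
    · intro h
      refine ⟨by omega, ?_⟩
      rw [Int.ceil_le, div_le_iff₀ hLR]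
      have h2 : (τ ω : ℝ) ≤ (k : ℝ) + ((j : ℤ) + 2) * (L : ℝ) := by exact_mod_cast h
      push_cast at h2 ⊢; linarith
  have hashift : ∀ j : ℕ, a (j + 1) = (μ {ω | k + ((j : ℤ) + 2) * L < τ ω}).toReal := by
    intro j
    have h2 : ((↑(j + 1) : ℤ) + 1) = (j : ℤ) + 2 := by push_cast; ring
    simp only [ha_def, h2]
  have ha0 : ∀ j, 0 ≤ a j := fun j => ENNReal.toReal_nonneg
  have ha1 : ∀ j, a j ≤ 1 := by
    intro j
    have h1 : μ {ω | k + ((j : ℤ) + 1) * L < τ ω} ≤ 1 := prob_le_one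
    calc a j ≤ (1 : ENNReal).toReal := ENNReal.toReal_mono ENNReal.one_ne_top h1
      _ = 1 := ENNReal.toReal_one
  -- complement probability
  have hcompl : ∀ j : ℕ, (μ {ω | J ω ≤ (j : ℤ) + 1}).toReal = 1 - a (j + 1) := by
    intro j
    rw [hset2 j, prob_compl_eq_one_sub (hmeas _), hashift j,
      ENNReal.toReal_sub_of_le prob_le_one ENNReal.one_ne_top, ENNReal.toReal_one]
  -- summability of a from integrability of J
  have hJnn : ∀ ω, (0 : ℤ) ≤ J ω := fun ω => by rw [hJ ω]; exact le_max_left _ _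
  have hmeasJ : ∀ j : ℕ, MeasurableSet {ω | (j : ℤ) + 1 ≤ J ω} := fun j => by
    rw [hset1 j]; exact hmeas _
  have hsum_a : Summable a := by
    apply summable_of_sum_range_le ha0 (c := ∫ ω, (J ω : ℝ) ∂μ)
    intro n
    have key : ∀ j : ℕ, a j
        = ∫ ω, Set.indicator {ω' | (j : ℤ) + 1 ≤ J ω'} (fun _ => (1 : ℝ)) ω ∂μ := by
      intro j
      rw [integral_indicator_const (1 : ℝ) (hmeasJ j), smul_eq_mul, mul_one, hset1 j, measureReal_def]
    calc ∑ j ∈ Finset.range n, a j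
        = ∑ j ∈ Finset.range n,
            ∫ ω, Set.indicator {ω' | (j : ℤ) + 1 ≤ J ω'} (fun _ => (1 : ℝ)) ω ∂μ :=
          Finset.sum_congr rfl fun j _ => key j
      _ = ∫ ω, ∑ j ∈ Finset.range n,
            Set.indicator {ω' | (j : ℤ) + 1 ≤ J ω'} (fun _ => (1 : ℝ)) ω ∂μ := by
          rw [integral_finset_sum]
          intro j _
          exact (integrable_const (1 : ℝ)).indicator (hmeasJ j)
      _ ≤ ∫ ω, (J ω : ℝ) ∂μ := by
          apply integral_mono
          · apply integrable_finset_sum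
            intro j _
            exact (integrable_const (1 : ℝ)).indicator (hmeasJ j)
          · exact hJint
          · intro ω
            dsimp only
            have hle : ∑ j ∈ Finset.range n,
                Set.indicator {ω' | (j : ℤ) + 1 ≤ J ω'} (fun _ => (1 : ℝ)) ω
                = (((Finset.range n).filter (fun j : ℕ => ((j : ℤ) + 1 ≤ J ω))).card : ℝ) := by
              rw [← Finset.sum_boole]
              apply Finset.sum_congr rfl
              intro j _
              simp [Set.indicator_apply, Set.mem_setOf_eq]
            rw [hle]
            have hsub : (Finset.range n).filter (fun j : ℕ => ((j : ℤ) + 1 ≤ J ω))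
                ⊆ Finset.range (J ω).toNat := by
              intro j hj
              simp only [Finset.mem_filter, Finset.mem_range] at hj ⊢
              omega
            have hcard := Finset.card_le_card hsub
            rw [Finset.card_range] at hcard
            have : (((J ω).toNat : ℤ) : ℝ) = ((J ω : ℤ) : ℝ) := by
              rw [Int.toNat_of_nonneg (hJnn ω)]
            calc ((((Finset.range n).filter (fun j : ℕ => ((j : ℤ) + 1 ≤ J ω))).card : ℕ) : ℝ)
                ≤ (((J ω).toNat : ℕ) : ℝ) := by exact_mod_cast hcard
              _ = (J ω : ℝ) := by push_cast at this ⊢; exact this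
  -- combination
  have hterm : ∀ j : ℕ,
      min (μ {ω | (j : ℤ) + 1 ≤ J ω}).toReal (μ {ω | J ω ≤ (j : ℤ) + 1}).toReal
        = min (a j) (1 - a (j + 1)) := by
    intro j
    rw [hset1 j, hcompl j]
  have hg : ∀ j : ℕ,
      1 - |(μ {ω | k + ((j : ℤ) + 2) * L < τ ω}).toReal
            + (μ {ω | k + ((j : ℤ) + 1) * L < τ ω}).toReal - 1|
        = 1 - |a (j + 1) + a j - 1| := by
    intro j
    rw [hashift j]
  have ha0eq : (μ {ω | k + L < τ ω}).toReal = a 0 := by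
    have h2 : {ω | k + L < τ ω} = {ω | k + (((0 : ℕ) : ℤ) + 1) * L < τ ω} := by
      norm_num
    rw [h2]
  rw [tsum_congr hterm, tsum_congr hg, ha0eq]
  -- now pure analysis with the sequence a
  set m : ℕ → ℝ := fun j => min (a j) (1 - a (j + 1)) with hm_def
  set g : ℕ → ℝ := fun j => 1 - |a (j + 1) + a j - 1| with hg_def
  have hm_nonneg : ∀ j, 0 ≤ m j := fun j =>
    le_min (ha0 j) (by have := ha1 (j + 1); linarith)
  have hsum_m : Summable m :=
    Summable.of_nonneg_of_le hm_nonneg (fun j => min_le_left _ _) hsum_a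
  have hsum_a' : Summable (fun j => a (j + 1)) := by
    exact (summable_nat_add_iff 1).2 hsum_a
  have hg_nonneg : ∀ j, 0 ≤ g j := by
    intro j
    have h1 := ha0 j; have h2 := ha0 (j + 1); have h3 := ha1 j; have h4 := ha1 (j + 1)
    have : |a (j + 1) + a j - 1| ≤ 1 := abs_le.2 ⟨by linarith, by linarith⟩
    simp only [hg_def]; linarith
  have hg_le : ∀ j, g j ≤ a j + a (j + 1) := by
    intro j
    have : (1 : ℝ) - (a (j + 1) + a j) ≤ |a (j + 1) + a j - 1| := by
      rw [abs_sub_comm]; exact le_abs_self _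
    simp only [hg_def]; linarith
  have hsum_g : Summable g :=
    Summable.of_nonneg_of_le hg_nonneg hg_le (hsum_a.add hsum_a')
  have hmg : ∀ j, m j = 0.5 * g j + 0.5 * (a j - a (j + 1)) := by
    intro j
    simp only [hm_def, hg_def]
    rcases le_total (a j) (1 - a (j + 1)) with h | h
    · rw [min_eq_left h, abs_of_nonpos (by linarith)]; ring
    · rw [min_eq_right h, abs_of_nonneg (by linarith)]; ring
  have hsum_d : Summable (fun j => a j - a (j + 1)) := hsum_a.sub hsum_a'
  have htsum_d : ∑' j, (a j - a (j + 1)) = a 0 := by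
    have hps : Filter.Tendsto (fun n => ∑ j ∈ Finset.range n, (a j - a (j + 1)))
        Filter.atTop (nhds (a 0)) := by
      have heq : ∀ n, ∑ j ∈ Finset.range n, (a j - a (j + 1)) = a 0 - a n := by
        intro n; exact Finset.sum_range_sub' a n
      simp only [heq]
      have := hsum_a.tendsto_atTop_zero
      have h2 : Filter.Tendsto (fun n => a 0 - a n) Filter.atTop (nhds (a 0 - 0)) :=
        Filter.Tendsto.sub tendsto_const_nhds this
      simpa using h2
    exact tendsto_nhds_unique hsum_d.hasSum.tendsto_sum_nat hps
  calc ∑' j, m j = ∑' j, (0.5 * g j + 0.5 * (a j - a (j + 1))) := tsum_congr hmg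
    _ = ∑' j, 0.5 * g j + ∑' j, 0.5 * (a j - a (j + 1)) :=
        Summable.tsum_add (hsum_g.mul_left 0.5) (hsum_d.mul_left 0.5)
    _ = 0.5 * ∑' j, g j + 0.5 * ∑' j, (a j - a (j + 1)) := by rw [tsum_mul_left, tsum_mul_left]
    _ = 0.5 * ∑' j, g j + 0.5 * a 0 := by rw [htsum_d]
end

section
/- Let J be a random variable taking values in the nonnegative integers with E[J] < ∞, and write p_j = P(J = j). Then B(J) = E[J] if and only if 2·p_0 ≥ 1 − p_1, where B(J) = Σ_{j≥1} min{P(J ≥ j), P(J ≤ j)}. -/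
open MeasureTheory ProbabilityTheory ENNReal
open scoped ENNReal

/-- Let `J` be a nonnegative-integer-valued random variable with finite
expectation and `p_j = P(J = j)`.  Then
`B(J) = Σ_{j≥1} min{P(J ≥ j), P(J ≤ j)} = E[J]` if and only if `2·p_0 ≥ 1 − p_1`. -/
theorem stmt_4 {Ω : Type*} [MeasurableSpace Ω] (μ : Measure Ω) [IsProbabilityMeasure μ]
    (J : Ω → ℕ) (hJmeas : Measurable J)
    (hJint : Integrable (fun ω => (J ω : ℝ)) μ) :
    (∑' j : ℕ, min (μ {ω | j + 1 ≤ J ω}).toReal (μ {ω | J ω ≤ j + 1}).toReal)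
        = ∫ ω, (J ω : ℝ) ∂μ
      ↔ 2 * (μ {ω | J ω = 0}).toReal ≥ 1 - (μ {ω | J ω = 1}).toReal := by
  set a : ℕ → ℝ≥0∞ := fun j => μ {ω | j + 1 ≤ J ω} with ha_def
  have hmeasA : ∀ j : ℕ, MeasurableSet {ω | j + 1 ≤ J ω} := fun j =>
    hJmeas measurableSet_Ici
  -- pointwise layer cake
  have key : ∀ ω, (J ω : ℝ≥0∞)
      = ∑' j : ℕ, Set.indicator {ω | j + 1 ≤ J ω} (1 : Ω → ℝ≥0∞) ω := by
    intro ω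
    have : ∀ j : ℕ, Set.indicator {ω | j + 1 ≤ J ω} (1 : Ω → ℝ≥0∞) ω
        = if j + 1 ≤ J ω then 1 else 0 := fun j => by
      simp [Set.indicator_apply, Set.mem_setOf_eq]
    simp_rw [this]
    rw [tsum_eq_sum (s := Finset.range (J ω)) ?_]
    · rw [Finset.sum_congr rfl fun j hj => ?_, Finset.sum_const, nsmul_eq_mul, mul_one,
        Finset.card_range]
      rw [if_pos (Nat.succ_le_of_lt (Finset.mem_range.mp hj))]
    · intro j hj
      rw [if_neg]
      exact fun h => hj (Finset.mem_range.mpr (Nat.lt_of_succ_le h))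
  have lint : ∫⁻ ω, (J ω : ℝ≥0∞) ∂μ = ∑' j : ℕ, a j := by
    simp_rw [key]
    rw [lintegral_tsum fun j => ((measurable_one.indicator (hmeasA j)).aemeasurable)]
    exact tsum_congr fun j => lintegral_indicator_one (hmeasA j)
  have hfin : ∑' j : ℕ, a j ≠ ⊤ := by
    rw [← lint]
    have h2 := hJint.hasFiniteIntegral
    rw [HasFiniteIntegral] at h2
    have : ∀ ω, ‖(J ω : ℝ)‖ₑ = (J ω : ℝ≥0∞) := by
      intro ω; simp [Real.nnnorm_natCast]
    simp_rw [this] at h2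
    exact h2.ne
  have hint : ∫ ω, (J ω : ℝ) ∂μ = ∑' j : ℕ, (a j).toReal := by
    rw [integral_eq_lintegral_of_nonneg_ae (Filter.Eventually.of_forall fun ω => Nat.cast_nonneg _)
      hJint.aestronglyMeasurable]
    simp_rw [ENNReal.ofReal_natCast]
    rw [lint, ENNReal.tsum_toReal_eq fun j => measure_ne_top μ _]
  rw [hint]
  -- abbreviations
  set b : ℕ → ℝ≥0∞ := fun j => μ {ω | J ω ≤ j + 1} with hb_def
  have hsummable : Summable fun j => (a j).toReal := ENNReal.summable_toReal hfin
  have hU : (b 0).toReal = (μ {ω | J ω = 0}).toReal + (μ {ω | J ω = 1}).toReal := by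
    have hset : {ω | J ω ≤ 0 + 1} = {ω | J ω = 0} ∪ {ω | J ω = 1} := by
      ext ω; simp [Nat.le_one_iff_eq_zero_or_eq_one]
    have hdisj : Disjoint {ω | J ω = 0} {ω | J ω = 1} := by
      rw [Set.disjoint_left]; intro ω h0 h1; simp_all
    rw [hb_def]
    simp only
    rw [hset, measure_union hdisj (hJmeas (measurableSet_singleton 1)),
      ENNReal.toReal_add (measure_ne_top μ _) (measure_ne_top μ _)]
  have hL : (a 0).toReal = 1 - (μ {ω | J ω = 0}).toReal := by
    have hset : {ω | 0 + 1 ≤ J ω} = {ω | J ω = 0}ᶜ := by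
      ext ω; simp [Nat.one_le_iff_ne_zero]
    rw [ha_def]
    simp only
    rw [hset, measure_compl (s := {ω | J ω = 0}) (hJmeas (measurableSet_singleton 0)) (measure_ne_top μ _),
      measure_univ, ENNReal.toReal_sub_of_le prob_le_one ENNReal.one_ne_top, ENNReal.toReal_one]
  have hAmono : ∀ j : ℕ, (a j).toReal ≤ (a 0).toReal := fun j =>
    ENNReal.toReal_mono (measure_ne_top μ _)
      (measure_mono fun ω h => by simp only [Set.mem_setOf_eq] at *; omega)
  have hBmono : ∀ j : ℕ, (b 0).toReal ≤ (b j).toReal := fun j =>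
    ENNReal.toReal_mono (measure_ne_top μ _)
      (measure_mono fun ω h => by simp only [Set.mem_setOf_eq] at *; omega)
  constructor
  · intro hsum
    by_contra hcond
    push_neg at hcond
    have h0 : (b 0).toReal < (a 0).toReal := by rw [hU, hL]; linarith
    have hlt : (∑' j : ℕ, min (a j).toReal (b j).toReal) < ∑' j : ℕ, (a j).toReal := by
      refine Summable.tsum_lt_tsum (f := fun j => min (a j).toReal (b j).toReal)
        (g := fun j => (a j).toReal) (fun j => min_le_left _ _) (i := 0) ?_
        (Summable.of_nonneg_of_le (fun j => le_min ENNReal.toReal_nonneg ENNReal.toReal_nonneg)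
          (fun j => min_le_left _ _) hsummable) hsummable
      simpa [min_eq_right h0.le] using h0
    exact absurd hsum hlt.ne
  · intro hcond
    have h0 : (a 0).toReal ≤ (b 0).toReal := by rw [hU, hL]; linarith
    exact tsum_congr fun j =>
      min_eq_left ((hAmono j).trans (h0.trans (hBmono j)))
end

section
/- Let J be a random variable taking values in the nonnegative integers with E[J] < ∞, and let m be the smallest integer median of J. If B(J) = E[J], where B(J) = Σ_{j≥1} min{P(J ≥ j), P(J ≤ j)}, then m ≤ 1. -/
open MeasureTheory ProbabilityTheory

lemma aux_tsum_if (n : ℕ) : (∑' j : ℕ, if j + 1 ≤ n then (1 : ENNReal) else 0) = n := by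
  have h0 : ∀ j ∉ Finset.range n, (if j + 1 ≤ n then (1 : ENNReal) else 0) = 0 := by
    intro j hj
    simp only [Finset.mem_range, not_lt] at hj
    simp [Nat.succ_le_iff, not_lt.mpr hj]
  rw [tsum_eq_sum h0]
  have h1 : ∀ j ∈ Finset.range n, (if j + 1 ≤ n then (1 : ENNReal) else 0) = 1 := by
    intro j hj
    simp only [Finset.mem_range] at hj
    simp [Nat.succ_le_iff, hj]
  rw [Finset.sum_congr rfl h1]
  simp

lemma aux_lintegral_nat {Ω : Type*} [MeasurableSpace Ω] (μ : Measure Ω)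
    (J : Ω → ℕ) (hJmeas : Measurable J) :
    ∫⁻ ω, (J ω : ENNReal) ∂μ = ∑' j : ℕ, μ {ω | j + 1 ≤ J ω} := by
  have hms : ∀ j : ℕ, MeasurableSet {ω | j + 1 ≤ J ω} := fun j =>
    (hJmeas measurableSet_Ici : MeasurableSet (J ⁻¹' Set.Ici (j + 1)))
  have hpt : ∀ ω, (J ω : ENNReal) = ∑' j : ℕ, Set.indicator {ω | j + 1 ≤ J ω} (fun _ => 1) ω := by
    intro ω
    rw [← aux_tsum_if (J ω)]
    congr 1; ext j
    by_cases h : j + 1 ≤ J ω <;> simp [Set.indicator, h] <;> omega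
  calc ∫⁻ ω, (J ω : ENNReal) ∂μ
      = ∫⁻ ω, ∑' j : ℕ, Set.indicator {ω | j + 1 ≤ J ω} (fun _ => 1) ω ∂μ :=
        lintegral_congr hpt
    _ = ∑' j : ℕ, ∫⁻ ω, Set.indicator {ω | j + 1 ≤ J ω} (fun _ => 1) ω ∂μ :=
        lintegral_tsum (fun j => (Measurable.indicator measurable_const (hms j)).aemeasurable)
    _ = ∑' j : ℕ, μ {ω | j + 1 ≤ J ω} := by
        refine tsum_congr (fun j => ?_)
        rw [lintegral_indicator (hms j)]
        simp

/-- Let `J` be a nonnegative-integer-valued random variable with finite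
expectation and let `m` be the smallest integer median of `J`.  If
`B(J) = Σ_{j≥1} min{P(J ≥ j), P(J ≤ j)} = E[J]`, then `m ≤ 1`. -/
theorem stmt_6 {Ω : Type*} [MeasurableSpace Ω] (μ : Measure Ω) [IsProbabilityMeasure μ]
    (J : Ω → ℕ) (hJmeas : Measurable J)
    (hJint : Integrable (fun ω => (J ω : ℝ)) μ)
    (m : ℕ)
    (hm : IsLeast {n : ℕ | (μ {ω | J ω ≤ n}).toReal ≥ 1 / 2 ∧
            (μ {ω | n ≤ J ω}).toReal ≥ 1 / 2} m)
    (hB : (∑' j : ℕ, min (μ {ω | j + 1 ≤ J ω}).toReal (μ {ω | J ω ≤ j + 1}).toReal)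
            = ∫ ω, (J ω : ℝ) ∂μ) :
    m ≤ 1 := by
  set a : ℕ → ℝ := fun j => (μ {ω | j + 1 ≤ J ω}).toReal with ha
  set b : ℕ → ℝ := fun j => (μ {ω | J ω ≤ j + 1}).toReal with hb
  have hlint : ∫⁻ ω, (J ω : ENNReal) ∂μ = ∑' j : ℕ, μ {ω | j + 1 ≤ J ω} :=
    aux_lintegral_nat μ J hJmeas
  have hfin : ∫⁻ ω, (J ω : ENNReal) ∂μ ≠ ⊤ := by
    have h := hJint.hasFiniteIntegral
    rw [HasFiniteIntegral] at h
    refine ne_of_lt (lt_of_le_of_lt (le_of_eq ?_) h)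
    refine lintegral_congr (fun ω => ?_)
    simp [Real.nnnorm_natCast, ENNReal.coe_natCast]
  have htsum_fin : (∑' j : ℕ, μ {ω | j + 1 ≤ J ω}) ≠ ⊤ := hlint ▸ hfin
  have hsummable_a : Summable a := ENNReal.summable_toReal htsum_fin
  have hint_eq : ∫ ω, (J ω : ℝ) ∂μ = ∑' j, a j := by
    rw [integral_eq_lintegral_of_nonneg_ae (Filter.Eventually.of_forall (fun ω => by positivity))
      hJint.aestronglyMeasurable]
    have h2 : ∫⁻ ω, ENNReal.ofReal ((J ω : ℝ)) ∂μ = ∫⁻ ω, (J ω : ENNReal) ∂μ :=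
      lintegral_congr (fun ω => by simp [ENNReal.ofReal_natCast])
    rw [h2, hlint, ENNReal.tsum_toReal_eq (fun j => measure_ne_top μ _)]
  have hmin_le : ∀ j, min (a j) (b j) ≤ a j := fun j => min_le_left _ _
  have hsummable_min : Summable (fun j => min (a j) (b j)) :=
    Summable.of_nonneg_of_le (fun j => le_min ENNReal.toReal_nonneg ENNReal.toReal_nonneg)
      hmin_le hsummable_a
  have hsum_eq : (∑' j, min (a j) (b j)) = ∑' j, a j := by rw [hB, hint_eq]
  have hterm : a 0 ≤ b 0 := by
    by_contra hcon
    push_neg at hcon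
    have h1 : (∑' j, min (a j) (b j)) < ∑' j, a j :=
      Summable.tsum_lt_tsum (i := 0) hmin_le (min_lt_iff.mpr (Or.inr hcon)) hsummable_min hsummable_a
    exact absurd hsum_eq (ne_of_lt h1)
  have h01 : a 0 = (μ {ω | 1 ≤ J ω}).toReal := by simp only [ha]
  have hb1 : b 0 = (μ {ω | J ω ≤ 1}).toReal := by simp only [hb]
  by_cases hc : (1:ℝ) / 2 ≤ (μ {ω | 1 ≤ J ω}).toReal
  · refine hm.2 ⟨?_, hc⟩
    calc (1:ℝ)/2 ≤ (μ {ω | 1 ≤ J ω}).toReal := hc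
      _ ≤ (μ {ω | J ω ≤ 1}).toReal := by rw [← h01, ← hb1]; exact hterm
  · push_neg at hc
    have hm0 : MeasurableSet {ω | J ω ≤ 0} :=
      (hJmeas measurableSet_Iic : MeasurableSet (J ⁻¹' Set.Iic 0))
    have hcompl : {ω | J ω ≤ 0}ᶜ = {ω | 1 ≤ J ω} := by
      ext ω; simp [Nat.succ_le_iff, Nat.pos_iff_ne_zero, Nat.le_zero]
    have hsplit : (μ {ω | J ω ≤ 0}).toReal + (μ {ω | 1 ≤ J ω}).toReal = 1 := by
      have h3 := measure_add_measure_compl (μ := μ) hm0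
      rw [hcompl, measure_univ] at h3
      have := congrArg ENNReal.toReal h3
      rw [ENNReal.toReal_add (measure_ne_top μ _) (measure_ne_top μ _)] at this
      simpa using this
    have h0mem : m ≤ 0 := by
      refine hm.2 ⟨by linarith, ?_⟩
      have : {ω | 0 ≤ J ω} = Set.univ := by ext ω; simp
      rw [this]
      simp
      norm_num
    omega
end

section
/- Let J be a random variable taking values in the nonnegative integers with E[J] < ∞, and for j ≥ 1 set S_j = P(J > j) + 0.5·P(J = j). Then Σ_{j≥1} min{S_j, 1 − S_j} + 0.5·P(J > 0) = Σ_{j≥1} min{P(J ≥ j), P(J ≤ j)}. -/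
open MeasureTheory ProbabilityTheory
open scoped ENNReal NNReal

/-- Let `J` be a nonnegative-integer-valued random variable with finite
expectation and, for `j ≥ 1`, let `S_j = P(J > j) + 0.5·P(J = j)`.  Then
`Σ_{j≥1} min{S_j, 1 − S_j} + 0.5·P(J > 0) = Σ_{j≥1} min{P(J ≥ j), P(J ≤ j)}`. -/
theorem stmt_7 {Ω : Type*} [MeasurableSpace Ω] (μ : Measure Ω) [IsProbabilityMeasure μ]
    (J : Ω → ℕ) (hJmeas : Measurable J)
    (hJint : Integrable (fun ω => (J ω : ℝ)) μ)
    (S : ℕ → ℝ)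
    (hS : ∀ j, 1 ≤ j →
      S j = (μ {ω | j < J ω}).toReal + 0.5 * (μ {ω | J ω = j}).toReal) :
    (∑' j : ℕ, min (S (j + 1)) (1 - S (j + 1))) + 0.5 * (μ {ω | 0 < J ω}).toReal
      = ∑' j : ℕ, min (μ {ω | j + 1 ≤ J ω}).toReal (μ {ω | J ω ≤ j + 1}).toReal := by
  classical
  -- basic measurability
  have hmeq : ∀ k : ℕ, MeasurableSet {ω | J ω = k} := fun k => hJmeas (measurableSet_singleton k)
  have hmlt : ∀ k : ℕ, MeasurableSet {ω | k < J ω} := fun k => hJmeas measurableSet_Ioi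
  have hmle : ∀ k : ℕ, MeasurableSet {ω | J ω ≤ k} := fun k => hJmeas measurableSet_Iic
  -- abbreviations
  set a : ℕ → ℝ := fun j => (μ {ω | j + 1 < J ω}).toReal with ha
  set b : ℕ → ℝ := fun j => (μ {ω | J ω = j + 1}).toReal with hb
  -- finiteness of the expected value, as a lintegral
  have hfin : (∫⁻ ω, (J ω : ℝ≥0∞) ∂μ) ≠ ⊤ := by
    have := hJint.hasFiniteIntegral
    rw [HasFiniteIntegral] at this
    have heq : ∀ ω, ‖(J ω : ℝ)‖ₑ = (J ω : ℝ≥0∞) := by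
      intro ω
      exact Real.enorm_natCast _
    simp only [heq] at this
    exact this.ne
  -- lintegral equals sum of k * μ {J = k}
  have hlint : (∫⁻ ω, (J ω : ℝ≥0∞) ∂μ)
      = ∑' k : ℕ, (k : ℝ≥0∞) * μ {ω | J ω = k} := by
    have hpt : ∀ ω, (J ω : ℝ≥0∞)
        = ∑' k : ℕ, Set.indicator {ω' | J ω' = k} (fun _ => (k : ℝ≥0∞)) ω := by
      intro ω
      rw [tsum_eq_single (J ω)]
      · simp [Set.indicator_of_mem, Set.mem_setOf_eq]
      · intro k hk
        simp only [Set.indicator_apply, Set.mem_setOf_eq]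
        rw [if_neg (fun h => hk h.symm)]
    calc (∫⁻ ω, (J ω : ℝ≥0∞) ∂μ)
        = ∫⁻ ω, ∑' k : ℕ, Set.indicator {ω' | J ω' = k} (fun _ => (k : ℝ≥0∞)) ω ∂μ := by
          simp_rw [← hpt]
      _ = ∑' k : ℕ, ∫⁻ ω, Set.indicator {ω' | J ω' = k} (fun _ => (k : ℝ≥0∞)) ω ∂μ := by
          refine lintegral_tsum (fun k => ?_)
          exact ((measurable_const).indicator (hmeq k)).aemeasurable
      _ = ∑' k : ℕ, (k : ℝ≥0∞) * μ {ω | J ω = k} := by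
          refine tsum_congr (fun k => ?_)
          rw [lintegral_indicator (hmeq k), setLIntegral_const]
  -- tail sums: μ {n < J} = ∑' k, indicator (n < k) (μ {J = k})
  have htail : ∀ n : ℕ, μ {ω | n < J ω}
      = ∑' k : ℕ, Set.indicator {k' : ℕ | n < k'} (fun k' => μ {ω | J ω = k'}) k := by
    intro n
    have hset : {ω | n < J ω} = ⋃ k ∈ {k' : ℕ | n < k'}, {ω | J ω = k} := by
      ext ω; simp [Set.mem_setOf_eq, eq_comm]
    rw [hset, measure_biUnion (Set.to_countable _) ?_ (fun k _ => hmeq k)]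
    · exact tsum_subtype {k' : ℕ | n < k'} (fun k' => μ {ω | J ω = k'})
    · intro i hi j hj hij
      refine Set.disjoint_left.2 (fun ω h1 h2 => hij ?_)
      simp only [Set.mem_setOf_eq] at h1 h2
      rw [← h1, ← h2]
  -- summability of tail probabilities
  have htsum_tail : (∑' n : ℕ, μ {ω | n < J ω}) ≠ ⊤ := by
    have : (∑' n : ℕ, μ {ω | n < J ω})
        = ∑' k : ℕ, (k : ℝ≥0∞) * μ {ω | J ω = k} := by
      simp_rw [htail]
      rw [ENNReal.tsum_comm]
      refine tsum_congr (fun k => ?_)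
      rw [tsum_eq_sum (s := Finset.range k) (fun n hn => by
        simp only [Set.indicator_apply, Set.mem_setOf_eq]
        rw [if_neg]
        simpa using hn)]
      have : ∀ n ∈ Finset.range k,
          Set.indicator {k' : ℕ | n < k'} (fun k' => μ {ω | J ω = k'}) k
            = μ {ω | J ω = k} := by
        intro n hn
        simp only [Set.indicator_apply, Set.mem_setOf_eq]
        rw [if_pos (Finset.mem_range.1 hn)]
      rw [Finset.sum_congr rfl this, Finset.sum_const, Finset.card_range, nsmul_eq_mul]
    rw [this, ← hlint]
    exact hfin
  have hFsum : Summable (fun n : ℕ => (μ {ω | n < J ω}).toReal) :=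
    ENNReal.summable_toReal htsum_tail
  -- summability of point masses
  have hbsum : Summable b := by
    refine summable_measure_toReal (fun j => hmeq (j + 1)) ?_
    intro i j hij
    refine Set.disjoint_left.2 (fun ω h1 h2 => hij ?_)
    simp only [Set.mem_setOf_eq] at h1 h2
    omega
  -- pointwise decomposition of measures
  have hsplit : ∀ j : ℕ, (μ {ω | j + 1 ≤ J ω}).toReal = a j + b j := by
    intro j
    have hset : {ω | j + 1 ≤ J ω} = {ω | j + 1 < J ω} ∪ {ω | J ω = j + 1} := by
      ext ω; simp only [Set.mem_setOf_eq, Set.mem_union]; omega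
    have hdisj : Disjoint {ω | j + 1 < J ω} {ω | J ω = j + 1} := by
      refine Set.disjoint_left.2 (fun ω h1 h2 => ?_)
      simp only [Set.mem_setOf_eq] at h1 h2
      omega
    rw [hset, measure_union hdisj (hmeq (j + 1)),
      ENNReal.toReal_add (measure_ne_top _ _) (measure_ne_top _ _)]
  have hcompl : ∀ j : ℕ, (μ {ω | J ω ≤ j + 1}).toReal = 1 - a j := by
    intro j
    have hset : {ω | J ω ≤ j + 1} = {ω | j + 1 < J ω}ᶜ := by
      ext ω; simp [Set.mem_setOf_eq, not_lt]
    rw [hset, measure_compl (hmlt (j + 1)) (measure_ne_top _ _), measure_univ,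
      ENNReal.toReal_sub_of_le (prob_le_one) (by simp)]
    simp [ha]
  -- pointwise identity
  have hpoint : ∀ j : ℕ,
      min (μ {ω | j + 1 ≤ J ω}).toReal (μ {ω | J ω ≤ j + 1}).toReal
        = min (S (j + 1)) (1 - S (j + 1)) + 0.5 * b j := by
    intro j
    rw [hsplit j, hcompl j, hS (j + 1) (by omega)]
    have h1 : a j + b j = (a j + 0.5 * b j) + 0.5 * b j := by ring
    have h2 : 1 - a j = (1 - (a j + 0.5 * b j)) + 0.5 * b j := by ring
    rw [h1, h2, min_add_add_right]
  -- summabilities of the real series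
  have hfsum : Summable (fun j : ℕ =>
      min (μ {ω | j + 1 ≤ J ω}).toReal (μ {ω | J ω ≤ j + 1}).toReal) := by
    refine Summable.of_nonneg_of_le (fun j => le_min ENNReal.toReal_nonneg ENNReal.toReal_nonneg)
      (fun j => min_le_left _ _) hFsum
  have hhsum : Summable (fun j : ℕ => 0.5 * b j) := hbsum.mul_left _
  have hgsum : Summable (fun j : ℕ => min (S (j + 1)) (1 - S (j + 1))) := by
    have : (fun j : ℕ => min (S (j + 1)) (1 - S (j + 1)))
        = fun j => min (μ {ω | j + 1 ≤ J ω}).toReal (μ {ω | J ω ≤ j + 1}).toReal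
          - 0.5 * b j := by
      funext j; rw [hpoint j]; ring
    rw [this]
    exact hfsum.sub hhsum
  -- the tail probability sum of point masses
  have hb0 : (∑' j : ℕ, b j) = (μ {ω | 0 < J ω}).toReal := by
    have hset : {ω | 0 < J ω} = ⋃ j : ℕ, {ω | J ω = j + 1} := by
      ext ω
      simp only [Set.mem_setOf_eq, Set.mem_iUnion]
      constructor
      · intro h; exact ⟨J ω - 1, by omega⟩
      · rintro ⟨j, hj⟩; omega
    rw [hset, measure_iUnion ?_ (fun j => hmeq (j + 1)),
      ENNReal.tsum_toReal_eq (fun _ => measure_ne_top _ _)]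
    intro i j hij
    refine Set.disjoint_left.2 (fun ω h1 h2 => hij ?_)
    simp only [Set.mem_setOf_eq] at h1 h2
    omega
  -- conclude
  calc (∑' j : ℕ, min (S (j + 1)) (1 - S (j + 1))) + 0.5 * (μ {ω | 0 < J ω}).toReal
      = (∑' j : ℕ, min (S (j + 1)) (1 - S (j + 1))) + ∑' j : ℕ, 0.5 * b j := by
        rw [tsum_mul_left, hb0]
    _ = ∑' j : ℕ, (min (S (j + 1)) (1 - S (j + 1)) + 0.5 * b j) := (Summable.tsum_add hgsum hhsum).symm
    _ = ∑' j : ℕ, min (μ {ω | j + 1 ≤ J ω}).toReal (μ {ω | J ω ≤ j + 1}).toReal := by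
        exact tsum_congr (fun j => (hpoint j).symm)
end

section
/- Let 0 < p < 1, q = 1 − p, and let J be a nonnegative-integer-valued random variable with P(J > j) = q^{k+1+Lj} for every integer j ≥ 0, where L ≥ 1 and k ≥ 0 are integers. Suppose m ≥ 1 is the largest integer satisfying P(J ≥ m) ≥ P(J ≤ m). Then B(J) = Σ_{j=1}^{m} P(J ≤ j) + Σ_{j≥m+1} P(J ≥ j) = m − q^{k+1+L}·(1 − q^{mL} − q^{(m−1)L}) / (1 − q^L), where B(J) = Σ_{j≥1} min{P(J ≥ j), P(J ≤ j)}. -/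
open MeasureTheory ProbabilityTheory

/-- Let `0 < p < 1`, `q = 1 − p`, and let `J` be a nonnegative-integer-valued
random variable with `P(J > j) = q^{k+1+Lj}` for every `j ≥ 0`, where `L ≥ 1`, `k ≥ 0`.
Suppose `m ≥ 1` is the largest integer satisfying `P(J ≥ m) ≥ P(J ≤ m)`.  Then
`B(J) = Σ_{j≥1} min{P(J ≥ j), P(J ≤ j)}
      = Σ_{j=1}^{m} P(J ≤ j) + Σ_{j≥m+1} P(J ≥ j)
      = m − q^{k+1+L}·(1 − q^{mL} − q^{(m−1)L}) / (1 − q^L)`. -/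
theorem stmt_16 {Ω : Type*} [MeasurableSpace Ω] (μ : Measure Ω) [IsProbabilityMeasure μ]
    (p q : ℝ) (hp0 : 0 < p) (hp1 : p < 1) (hq : q = 1 - p)
    (L k : ℕ) (hL : 1 ≤ L)
    (J : Ω → ℕ) (hJmeas : Measurable J)
    (hJ : ∀ j : ℕ, (μ {ω | j < J ω}).toReal = q ^ (k + 1 + L * j))
    (m : ℕ) (hm1 : 1 ≤ m)
    (hm : IsGreatest {n : ℕ | (μ {ω | n ≤ J ω}).toReal ≥ (μ {ω | J ω ≤ n}).toReal} m) :
    (∑' j : ℕ, min (μ {ω | j + 1 ≤ J ω}).toReal (μ {ω | J ω ≤ j + 1}).toReal)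
        = (∑ j ∈ Finset.Icc 1 m, (μ {ω | J ω ≤ j}).toReal)
          + (∑' i : ℕ, (μ {ω | m + 1 + i ≤ J ω}).toReal)
      ∧ (∑ j ∈ Finset.Icc 1 m, (μ {ω | J ω ≤ j}).toReal)
          + (∑' i : ℕ, (μ {ω | m + 1 + i ≤ J ω}).toReal)
        = (m : ℝ) - q ^ (k + 1 + L) * (1 - q ^ (m * L) - q ^ ((m - 1) * L)) / (1 - q ^ L) := by
  obtain ⟨n, rfl⟩ : ∃ n, m = n + 1 := ⟨m - 1, (Nat.succ_pred_eq_of_pos hm1).symm⟩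
  have hq0 : 0 < q := by rw [hq]; linarith
  have hq1 : q < 1 := by rw [hq]; linarith
  set a : ℕ → ℝ := fun j => q ^ (k + 1 + L * j) with ha
  -- basic facts about a
  have ha0 : ∀ j, 0 < a j := fun j => pow_pos hq0 _
  have ha1 : ∀ j, a j ≤ 1 := fun j => pow_le_one₀ hq0.le hq1.le
  have hamono : ∀ i j, i ≤ j → a j ≤ a i := fun i j h =>
    pow_le_pow_of_le_one hq0.le hq1.le (by have := Nat.mul_le_mul_left L h; omega)
  -- probability identities
  have hge : ∀ j : ℕ, (μ {ω | j + 1 ≤ J ω}).toReal = a j := by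
    intro j
    have h1 : {ω | j + 1 ≤ J ω} = {ω | j < J ω} := by
      ext ω; simp only [Set.mem_setOf_eq]; omega
    rw [h1]; exact hJ j
  have hmeas : ∀ j : ℕ, MeasurableSet {ω | j < J ω} := fun j => hJmeas trivial
  have hle : ∀ j : ℕ, (μ {ω | J ω ≤ j}).toReal = 1 - a j := by
    intro j
    have h1 : {ω | J ω ≤ j} = {ω | j < J ω}ᶜ := by ext ω; simp [not_lt]
    rw [h1, prob_compl_eq_one_sub (hmeas j),
      ENNReal.toReal_sub_of_le prob_le_one ENNReal.one_ne_top, ENNReal.toReal_one, hJ j]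
  -- the crossing conditions
  have hcross : 1 - a (n + 1) ≤ a n := by
    have h1 := hm.1
    have h2 : {ω | n + 1 ≤ J ω} = {ω | n + 1 ≤ J ω} := rfl
    have hge' : (μ {ω | n + 1 ≤ J ω}).toReal = a n := hge n
    rw [Set.mem_setOf_eq, hge', hle] at h1
    linarith
  have hstrict : ∀ j, n + 1 ≤ j → a j < 1 - a (j + 1) := by
    intro j hj
    by_contra hcon
    push_neg at hcon
    have hmem : j + 1 ∈ {n : ℕ | (μ {ω | n ≤ J ω}).toReal ≥ (μ {ω | J ω ≤ n}).toReal} := by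
      rw [Set.mem_setOf_eq, hge j, hle (j + 1)]
      linarith
    have := hm.2 hmem
    omega
  -- min computations
  have hmin1 : ∀ j, j ≤ n → min (a j) (1 - a (j + 1)) = 1 - a (j + 1) := by
    intro j hj
    refine min_eq_right ?_
    have h1 : a n ≤ a j := hamono j n hj
    have h2 : a (n + 1) ≤ a (j + 1) := hamono (j + 1) (n + 1) (by omega)
    linarith
  have hmin2 : ∀ j, n + 1 ≤ j → min (a j) (1 - a (j + 1)) = a j :=
    fun j hj => min_eq_left (hstrict j hj).le
  -- summability
  have hrlt : q ^ L < 1 := pow_lt_one₀ hq0.le hq1 (by omega)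
  have hafun : a = fun j => q ^ (k + 1) * (q ^ L) ^ j := by
    funext j
    show q ^ (k + 1 + L * j) = q ^ (k + 1) * (q ^ L) ^ j
    rw [← pow_mul, ← pow_add]
  have hsuma : Summable a := by
    rw [hafun]
    exact (summable_geometric_of_lt_one (by positivity) hrlt).mul_left _
  set f : ℕ → ℝ := fun j => min (a j) (1 - a (j + 1)) with hf
  have hsumf : Summable f := by
    refine Summable.of_nonneg_of_le (fun j => le_min (ha0 j).le (by linarith [ha1 (j+1)]))
      (fun j => min_le_left _ _) hsuma
  -- rewrite LHS tsum
  have hterm : (fun j : ℕ => min (μ {ω | j + 1 ≤ J ω}).toReal (μ {ω | J ω ≤ j + 1}).toReal) = f := by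
    funext j; rw [hge j, hle (j + 1)]
  -- tail sums
  have htail_set : ∀ i : ℕ, {ω | n + 1 + 1 + i ≤ J ω} = {ω | (n + 1 + i) + 1 ≤ J ω} := by
    intro i; ext ω; simp only [Set.mem_setOf_eq]; omega
  have htailμ : (∑' i : ℕ, (μ {ω | n + 1 + 1 + i ≤ J ω}).toReal) = ∑' i : ℕ, a (n + 1 + i) := by
    refine tsum_congr fun i => ?_
    rw [htail_set i, hge (n + 1 + i)]
  have hsplit : ∑' j, f j = (∑ j ∈ Finset.range (n + 1), f j) + ∑' i, f (i + (n + 1)) :=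
    (Summable.sum_add_tsum_nat_add (n + 1) hsumf).symm
  have hhead : (∑ j ∈ Finset.range (n + 1), f j)
      = ∑ j ∈ Finset.Icc 1 (n + 1), (μ {ω | J ω ≤ j}).toReal := by
    rw [show Finset.Icc 1 (n + 1) = Finset.Ico 1 (n + 2) from rfl,
      Finset.sum_Ico_eq_sum_range]
    refine Finset.sum_congr (by norm_num) fun j hj => ?_
    rw [Finset.mem_range] at hj
    rw [hle (1 + j)]
    show a j ⊓ (1 - a (j + 1)) = 1 - a (1 + j)
    rw [hmin1 j (by omega), Nat.add_comm 1 j]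
  have htail2 : (∑' i, f (i + (n + 1))) = ∑' i : ℕ, a (n + 1 + i) := by
    refine tsum_congr fun i => ?_
    rw [show i + (n + 1) = n + 1 + i by ring]
    exact hmin2 (n + 1 + i) (by omega)
  have first : (∑' j : ℕ, min (μ {ω | j + 1 ≤ J ω}).toReal (μ {ω | J ω ≤ j + 1}).toReal)
      = (∑ j ∈ Finset.Icc 1 (n + 1), (μ {ω | J ω ≤ j}).toReal)
        + (∑' i : ℕ, (μ {ω | n + 1 + 1 + i ≤ J ω}).toReal) := by
    rw [hterm, hsplit, hhead, htail2, htailμ]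
  refine ⟨first, ?_⟩
  -- second equality: computation
  have hsum_tail : (∑' i : ℕ, (μ {ω | n + 1 + 1 + i ≤ J ω}).toReal)
      = q ^ (k + 1 + L * (n + 1)) * (1 - q ^ L)⁻¹ := by
    rw [htailμ]
    have : (fun i : ℕ => a (n + 1 + i)) = fun i => q ^ (k + 1 + L * (n + 1)) * (q ^ L) ^ i := by
      funext i
      show q ^ (k + 1 + L * (n + 1 + i)) = q ^ (k + 1 + L * (n + 1)) * (q ^ L) ^ i
      rw [show k + 1 + L * (n + 1 + i) = (k + 1 + L * (n + 1)) + L * i by ring, pow_add, pow_mul]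
    rw [this, tsum_mul_left, tsum_geometric_of_lt_one (by positivity) hrlt]
  have hsum_head : (∑ j ∈ Finset.Icc 1 (n + 1), (μ {ω | J ω ≤ j}).toReal)
      = (n + 1 : ℝ) - q ^ (k + 1) * (((q ^ L) ^ (n + 2) - 1) / (q ^ L - 1) - 1) := by
    have h1 : ∀ j ∈ Finset.Icc 1 (n + 1), (μ {ω | J ω ≤ j}).toReal
        = 1 - q ^ (k + 1) * (q ^ L) ^ j := by
      intro j _
      rw [hle j, hafun]
    rw [Finset.sum_congr rfl h1, Finset.sum_sub_distrib, Finset.sum_const, Nat.card_Icc]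
    rw [← Finset.mul_sum]
    have h2 : (∑ j ∈ Finset.Icc 1 (n + 1), (q ^ L) ^ j)
        = ((q ^ L) ^ (n + 2) - 1) / (q ^ L - 1) - 1 := by
      have h3 : (∑ j ∈ Finset.range (n + 2), (q ^ L) ^ j)
          = ((q ^ L) ^ (n + 2) - 1) / (q ^ L - 1) := geom_sum_eq (by linarith) _
      have h4 : Finset.range (n + 2) = Finset.Icc 0 (n + 1) := by
        ext x; simp [Nat.lt_succ_iff]
      have h5 : Finset.Icc 0 (n + 1) = insert 0 (Finset.Icc 1 (n + 1)) := by
        ext x; simp; omega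
      rw [h4, h5, Finset.sum_insert (by simp)] at h3
      simp at h3
      linarith
    rw [h2]
    push_cast
    ring
  rw [hsum_head, hsum_tail]
  have hne : 1 - q ^ L ≠ 0 := by linarith
  have hne' : q ^ L - 1 ≠ 0 := by linarith [hrlt]
  have hm1' : n + 1 - 1 = n := rfl
  rw [hm1']
  have hexp1 : q ^ (k + 1 + L * (n + 1)) = q ^ (k + 1) * (q ^ L) ^ (n + 1) := by
    rw [pow_add, ← pow_mul]
  have hexp2 : q ^ (k + 1 + L) = q ^ (k + 1) * q ^ L := by rw [pow_add]
  have hexp3 : q ^ ((n + 1) * L) = (q ^ L) ^ (n + 1) := by rw [← pow_mul, mul_comm]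
  have hexp4 : q ^ (n * L) = (q ^ L) ^ n := by rw [← pow_mul, mul_comm]
  rw [hexp1, hexp2, hexp3, hexp4]
  push_cast
  field_simp
  ring
end
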